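/- Let k ≥ 1, let x_1, …, x_k ∈ F be pairwise distinct, let y_1, …, y_k ∈ F be arbitrary, and let z ∈ F satisfy z + x_i ≠ 0 for all i. Then ∑_{i=1}^{k} ∏_{j=1}^{k} (x_i + y_j) / [ (z + x_i) · ∏_{i'≠i} (x_i − x_{i'}) ] = 1 − ∏_{j=1}^{k} (z − y_j) / ∏_{i=1}^{k} (z + x_i). -/

import Mathlib

open Polynomial Finset

lemma leadingCoeff_lagrange_basis {F : Type*} [Field F] {ι : Type*} [DecidableEq ι]
    {s : Finset ι} {v : ι → F} {i : ι} (hvs : Set.InjOn v s) (hi : i ∈ s) :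
    (Lagrange.basis s v i).leadingCoeff = Lagrange.nodalWeight s v i := by
  rw [Lagrange.basis, leadingCoeff_prod, Lagrange.nodalWeight]
  refine Finset.prod_congr rfl fun j hj => ?_
  rw [Lagrange.basisDivisor, leadingCoeff_mul, leadingCoeff_C, leadingCoeff_X_sub_C, mul_one]

lemma coeff_interpolate {F : Type*} [Field F] {ι : Type*} [DecidableEq ι]
    {s : Finset ι} {v : ι → F} (hvs : Set.InjOn v s) (r : ι → F) :
    (Lagrange.interpolate s v r).coeff (#s - 1) =
      ∑ i ∈ s, r i * Lagrange.nodalWeight s v i := by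
  rw [Lagrange.interpolate_apply, finset_sum_coeff]
  refine Finset.sum_congr rfl fun i hi => ?_
  rw [coeff_C_mul, ← Lagrange.natDegree_basis hvs hi, coeff_natDegree,
    leadingCoeff_lagrange_basis hvs hi]

/-- **Lagrange-type summation identity** (Lemma 5.18 (2) of the paper).
For pairwise distinct `x₁, …, x_k` in a field `F`, arbitrary `y₁, …, y_k`, and `z` with
`z + xᵢ ≠ 0` for all `i`:
`∑ᵢ ∏ⱼ (xᵢ + yⱼ) / ((z + xᵢ) ∏_{i'≠i} (xᵢ − x_{i'})) = 1 − ∏ⱼ (z − yⱼ) / ∏ᵢ (z + xᵢ)`. -/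

theorem stmt1 {F : Type*} [Field F] (k : ℕ) (hk : 1 ≤ k)
    (x : Fin k → F) (hx : Function.Injective x)
    (y : Fin k → F) (z : F) (hz : ∀ i, z + x i ≠ 0) :
    ∑ i : Fin k,
      (∏ j : Fin k, (x i + y j)) /
        ((z + x i) * ∏ i' ∈ Finset.univ.erase i, (x i - x i')) =
      1 - (∏ j : Fin k, (z - y j)) / ∏ i : Fin k, (z + x i) := by
  classical
  set v : Option (Fin k) → F := fun o => o.elim (-z) x with hv
  have hzx : ∀ i, -z ≠ x i := by
    intro i h
    exact hz i (by rw [← h]; ring)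
  have hvinj : Function.Injective v := by
    rintro (_ | a) (_ | b) h <;> simp only [hv, Option.elim] at h
    · rfl
    · exact absurd h (hzx b)
    · exact absurd h.symm (hzx a)
    · rw [hx h]
  set f : Polynomial F := ∏ j : Fin k, (Polynomial.X + Polynomial.C (y j)) with hf
  have hmonic : f.Monic := monic_prod_of_monic _ _ fun j _ => monic_X_add_C (y j)
  have hdeg : f.natDegree = k := by
    rw [hf, natDegree_prod_of_monic _ _ fun j _ => monic_X_add_C (y j)]
    simp
  have hcard : #(univ : Finset (Option (Fin k))) = k + 1 := by simp
  have hdlt : f.degree < #(univ : Finset (Option (Fin k))) := by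
    rw [hcard, degree_eq_natDegree hmonic.ne_zero, hdeg]
    exact_mod_cast Nat.lt_succ_self k
  have hint := Lagrange.eq_interpolate (v := v) (s := univ) (hvinj.injOn) hdlt
  have hkey : (1 : F) = ∑ o : Option (Fin k), f.eval (v o) * Lagrange.nodalWeight univ v o := by
    have := congrArg (fun p => Polynomial.coeff p (#(univ : Finset (Option (Fin k))) - 1)) hint
    simp only [coeff_interpolate hvinj.injOn] at this
    rw [← this, hcard]
    simpa [hdeg] using (hmonic.coeff_natDegree).symm ▸ (by rw [hdeg] : f.coeff k = f.coeff f.natDegree) ▸ rfl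
  have heval : ∀ t : F, f.eval t = ∏ j : Fin k, (t + y j) := by
    intro t; rw [hf, Polynomial.eval_prod]; simp
  -- compute nodal weights
  have hsetnone : (univ : Finset (Option (Fin k))).erase none = univ.image some := by
    ext o; cases o <;> simp
  have hwnone : Lagrange.nodalWeight univ v none = ∏ i : Fin k, (-z - x i)⁻¹ := by
    rw [Lagrange.nodalWeight, hsetnone, Finset.prod_image (Option.some_injective _).injOn]
    rfl
  have hsetsome : ∀ i : Fin k, (univ : Finset (Option (Fin k))).erase (some i)
      = insert none ((univ.erase i).image some) := by
    intro i; ext o; cases o <;> simp [eq_comm]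
  have hwsome : ∀ i : Fin k, Lagrange.nodalWeight univ v (some i)
      = (x i - (-z))⁻¹ * ∏ i' ∈ univ.erase i, (x i - x i')⁻¹ := by
    intro i
    rw [Lagrange.nodalWeight, hsetsome i, Finset.prod_insert (by simp),
      Finset.prod_image (by simp)]
    rfl
  rw [Fintype.sum_option] at hkey
  have hprodne : (∏ i : Fin k, (z + x i)) ≠ 0 := Finset.prod_ne_zero_iff.mpr fun i _ => hz i
  have hterm0 : f.eval (v none) * Lagrange.nodalWeight univ v none
      = (∏ j : Fin k, (z - y j)) / ∏ i : Fin k, (z + x i) := by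
    rw [hwnone, heval]
    have h1 : ∀ j : Fin k, (v none + y j) = -(z - y j) := by intro j; simp [hv]; ring
    have h2 : ∀ i : Fin k, (-z - x i)⁻¹ = -(z + x i)⁻¹ := by
      intro i; rw [show -z - x i = -(z + x i) by ring, ← neg_inv]
    have pn : ∀ g : Fin k → F, ∏ i : Fin k, -(g i) = (-1) ^ k * ∏ i : Fin k, g i := by
      intro g
      rw [show (∏ i : Fin k, -(g i)) = ∏ i : Fin k, (-1) * g i from
        Finset.prod_congr rfl fun i _ => (neg_one_mul _).symm,
        Finset.prod_mul_distrib, Finset.prod_const, card_univ, Fintype.card_fin]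
    simp_rw [h1, h2]
    rw [pn, pn, Finset.prod_inv_distrib, div_eq_mul_inv, mul_mul_mul_comm, ← mul_pow]
    simp
  have htermi : ∀ i : Fin k, f.eval (v (some i)) * Lagrange.nodalWeight univ v (some i)
      = (∏ j : Fin k, (x i + y j)) /
        ((z + x i) * ∏ i' ∈ Finset.univ.erase i, (x i - x i')) := by
    intro i
    rw [hwsome, heval]
    have : x i - (-z) = z + x i := by ring
    rw [this, div_eq_mul_inv, mul_inv, ← Finset.prod_inv_distrib]
    rfl
  rw [hterm0] at hkey
  simp_rw [htermi] at hkey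
  linear_combination -hkey
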